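/- Let Φ be a finite root system in a finite-dimensional real inner product space E with a fixed simple system {α₁,…,α_r} and irreducible components Φ₁,…,Φ_q. Let χ′ ∈ E satisfy (χ′, α_i) ≥ 0 for all i. Suppose that for each j = 1,…,q an index i_j is chosen with α_{i_j} ∈ Φ_j and (χ′, α_{i_j}) > (α_l, β) for every l ∈ {1,…,r} and every β ∈ Φ. Then for every root β such that β ≥ α_{i_j}, where Φ_j is the irreducible component containing β, and for every l ∈ {1,…,r}, one has (χ′ − α_l, β) ≥ 0; moreover the inequality is strict whenever (α_l, β) > 0. -/
import Mathlib


open scoped RealInnerProductSpace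

/-- The reflection `s_β` in the root `β`: `s_β(χ) = χ − (2(χ,β)/(β,β))·β`. -/
noncomputable def sRefl {E : Type*} [NormedAddCommGroup E] [InnerProductSpace ℝ E]
    (β χ : E) : E :=
  χ - (2 * ⟪χ, β⟫ / ⟪β, β⟫) • β

/-- `Φ` is a finite root system in `E`: a finite set of nonzero vectors spanning `E` such
that for all `α, β ∈ Φ` the reflection `s_α(β)` lies in `Φ`. -/
def IsRootSystem {E : Type*} [NormedAddCommGroup E] [InnerProductSpace ℝ E]
    (Φ : Finset E) : Prop :=
  (∀ β ∈ Φ, β ≠ 0) ∧ Submodule.span ℝ (Φ : Set E) = ⊤ ∧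
    ∀ α ∈ Φ, ∀ β ∈ Φ, sRefl α β ∈ Φ

/-- `α : Fin r → E` is a simple system for `Φ`: a basis of `E` consisting of roots such that
every root is a linear combination of the `α i` with coefficients all nonnegative or all
nonpositive. -/
def IsSimpleSystem {E : Type*} [NormedAddCommGroup E] [InnerProductSpace ℝ E]
    (Φ : Finset E) {r : ℕ} (α : Fin r → E) : Prop :=
  (∀ i, α i ∈ Φ) ∧ LinearIndependent ℝ α ∧ Submodule.span ℝ (Set.range α) = ⊤ ∧
    ∀ β ∈ Φ, ∃ c : Fin r → ℝ, β = ∑ i, c i • α i ∧ ((∀ i, 0 ≤ c i) ∨ (∀ i, c i ≤ 0))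

/-- `β ≥ β'` with respect to the simple system `α`: `β − β'` is a nonnegative linear
combination of the simple roots. -/
def rootGE {E : Type*} [NormedAddCommGroup E] [InnerProductSpace ℝ E]
    {r : ℕ} (α : Fin r → E) (β β' : E) : Prop :=
  ∃ c : Fin r → ℝ, (∀ i, 0 ≤ c i) ∧ β - β' = ∑ i, c i • α i

/-- `Φ₀` is an irreducible component of `Φ`: a nonempty subset of `Φ` orthogonal to its
complement in `Φ` which cannot itself be written as the disjoint union of two nonempty
mutually orthogonal subsets. -/
def IsIrreducibleComponent {E : Type*} [NormedAddCommGroup E] [InnerProductSpace ℝ E]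
    (Φ Φ₀ : Finset E) : Prop :=
  Φ₀ ⊆ Φ ∧ Φ₀.Nonempty ∧ (∀ a ∈ Φ₀, ∀ b ∈ Φ, b ∉ Φ₀ → ⟪a, b⟫ = 0) ∧
    ¬∃ Ψ₁ Ψ₂ : Finset E, Ψ₁.Nonempty ∧ Ψ₂.Nonempty ∧ Disjoint Ψ₁ Ψ₂ ∧
      (∀ a ∈ Ψ₁, ∀ b ∈ Ψ₂, ⟪a, b⟫ = 0) ∧ (Φ₀ : Set E) = ↑Ψ₁ ∪ ↑Ψ₂

/-- **Key inequality in the proof of the main theorem of the paper.** Let `Φ` be a finite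
root system with simple system `α₁,…,α_r` and irreducible components `Φ₁,…,Φ_q`. Let
`χ' ∈ E` satisfy `(χ', αᵢ) ≥ 0` for all `i`, and for each `j` let `i_j` be an index with
`α_{i_j} ∈ Φ_j` and `(χ', α_{i_j}) > (α_l, β)` for every `l` and every `β ∈ Φ`. Then for
every root `β` with `β ≥ α_{i_j}`, where `Φ_j` is the irreducible component containing `β`,
and every `l`, one has `(χ' − α_l, β) ≥ 0`, with strict inequality whenever `(α_l, β) > 0`. -/
theorem inner_highest_weight_sub_simple_nonneg
    {E : Type*} [NormedAddCommGroup E] [InnerProductSpace ℝ E] [FiniteDimensional ℝ E]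
    (Φ : Finset E) (hΦ : IsRootSystem Φ)
    {r : ℕ} (α : Fin r → E) (hα : IsSimpleSystem Φ α)
    {q : ℕ} (Φc : Fin q → Finset E)
    (hΦc : ∀ j, IsIrreducibleComponent Φ (Φc j))
    (hcover : ∀ β ∈ Φ, ∃ j, β ∈ Φc j)
    (χ' : E) (hχ'dom : ∀ i, 0 ≤ ⟪χ', α i⟫)
    (ix : Fin q → Fin r) (hix : ∀ j, α (ix j) ∈ Φc j)
    (hbig : ∀ j, ∀ l : Fin r, ∀ β ∈ Φ, ⟪α l, β⟫ < ⟪χ', α (ix j)⟫) :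
    ∀ β ∈ Φ, ∀ j, β ∈ Φc j → rootGE α β (α (ix j)) →
      ∀ l : Fin r, 0 ≤ ⟪χ' - α l, β⟫ ∧ (0 < ⟪α l, β⟫ → 0 < ⟪χ' - α l, β⟫) := by
  rintro β hβ j hβj ⟨c, hc, hsum⟩ l
  have h1 : ⟪χ', β - α (ix j)⟫ = ∑ i, c i * ⟪χ', α i⟫ := by
    rw [hsum, inner_sum]
    simp [real_inner_smul_right]
  have h2 : 0 ≤ ⟪χ', β - α (ix j)⟫ := by
    rw [h1]
    exact Finset.sum_nonneg fun i _ => mul_nonneg (hc i) (hχ'dom i)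
  rw [inner_sub_right] at h2
  have h4 : ⟪α l, β⟫ < ⟪χ', β⟫ := lt_of_lt_of_le (hbig j l β hβ) (by linarith)
  have h5 : 0 < ⟪χ' - α l, β⟫ := by rw [inner_sub_left]; linarith
  exact ⟨h5.le, fun _ => h5⟩
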